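/- Let G be a discrete group and p ∈ (1,∞). Then G is amenable if and only if for every finite subset E ⊆ G, ‖Σ_{t∈E} λ_p(t)‖ = |E| (operator norm on ℓ^p(G)). -/

import Mathlib

open scoped ENNReal ComplexOrder
open Filter Topology
open scoped NNReal

/-- `lam` is the left regular representation: `lam s` sends `δ_t` to `δ_{s t}`. -/
def IsLeftReg {G : Type*} [Group G] [DecidableEq G] {p : ℝ≥0∞} [Fact (1 ≤ p)]
    (lam : G → (lp (fun _ : G => ℂ) p →L[ℂ] lp (fun _ : G => ℂ) p)) : Prop :=
  ∀ s t : G, lam s (lp.single (E := fun _ : G => ℂ) p t 1) =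
    lp.single (E := fun _ : G => ℂ) p (s * t) 1

/-- `rho` is the right regular representation: `rho s` sends `δ_t` to `δ_{t s⁻¹}`. -/
def IsRightReg {G : Type*} [Group G] [DecidableEq G] {p : ℝ≥0∞} [Fact (1 ≤ p)]
    (rho : G → (lp (fun _ : G => ℂ) p →L[ℂ] lp (fun _ : G => ℂ) p)) : Prop :=
  ∀ s t : G, rho s (lp.single (E := fun _ : G => ℂ) p t 1) =
    lp.single (E := fun _ : G => ℂ) p (t * s⁻¹) 1

/-- Extension of a representation to finitely supported functions: `opOf lam f = Σ_s f(s) • lam s`. -/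
noncomputable def opOf {G : Type*} [Group G] {p : ℝ≥0∞} [Fact (1 ≤ p)]
    (lam : G → (lp (fun _ : G => ℂ) p →L[ℂ] lp (fun _ : G => ℂ) p)) (f : G →₀ ℂ) :
    lp (fun _ : G => ℂ) p →L[ℂ] lp (fun _ : G => ℂ) p :=
  f.sum fun s c => c • lam s

/-- A vector in `ℓ^p(G)` is nonnegative if all its coordinates are nonnegative reals. -/
def IsNonneg {G : Type*} {p : ℝ≥0∞} [Fact (1 ≤ p)] (ξ : lp (fun _ : G => ℂ) p) : Prop :=
  ∀ t : G, 0 ≤ ξ t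

section Scalar
open scoped NNReal


lemma clarkson_nnreal {q : ℝ} (hq : 2 ≤ q) (b c : ℝ≥0) :
    (2*b+c)^q + c^q ≤ 2^(q-1) * ((b+c)^q + b^q) := by
  have hq0 : (0:ℝ) < q := by linarith
  set X := 2*b+c
  set Y := c
  have hXY : X^(2:ℝ) + Y^(2:ℝ) = 2*((b+c)^(2:ℝ) + b^(2:ℝ)) := by
    rw [NNReal.rpow_two, NNReal.rpow_two, NNReal.rpow_two, NNReal.rpow_two]
    ring
  have h1 : (X^q + Y^q)^(1/q) ≤ (X^(2:ℝ) + Y^(2:ℝ))^(1/(2:ℝ)) :=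
    NNReal.rpow_add_rpow_le X Y two_pos hq
  -- power mean on (b+c), b
  have h2 : ((1/2 : ℝ≥0)*((b+c)^(2:ℝ)) + (1/2 : ℝ≥0)*(b^(2:ℝ)))^(q/2)
      ≤ (1/2 : ℝ≥0)*((b+c)^(2:ℝ))^(q/2) + (1/2 : ℝ≥0)*(b^(2:ℝ))^(q/2) :=
    NNReal.rpow_arith_mean_le_arith_mean2_rpow _ _ _ _ (add_halves 1) (by linarith)
  have hbc : ((b+c)^(2:ℝ))^(q/2) = (b+c)^q := by
    rw [← NNReal.rpow_mul]; congr 1; ring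
  have hbb : (b^(2:ℝ))^(q/2) = b^q := by
    rw [← NNReal.rpow_mul]; congr 1; ring
  rw [hbc, hbb] at h2
  -- raise h1 to the q
  have h1' : X^q + Y^q ≤ (X^(2:ℝ) + Y^(2:ℝ))^(q/(2:ℝ)) := by
    have := NNReal.rpow_le_rpow h1 hq0.le
    rwa [← NNReal.rpow_mul, ← NNReal.rpow_mul, one_div, inv_mul_cancel₀ hq0.ne',
      NNReal.rpow_one, show (1/(2:ℝ))*q = q/2 by ring] at this
  have h3 : (X^(2:ℝ) + Y^(2:ℝ))^(q/(2:ℝ)) ≤ (2:ℝ≥0)^(q-1) * ((b+c)^q + b^q) := by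
    rw [hXY]
    have hmean : (b+c)^(2:ℝ) + b^(2:ℝ) ≤ 2 * (((b+c)^q + b^q)/2)^((2:ℝ)/q) := by
      have h4 : (((b+c)^(2:ℝ) + b^(2:ℝ))/2)^(q/2) ≤ ((b+c)^q + b^q)/2 := by
        have e : (1/2 : ℝ≥0)*((b+c)^(2:ℝ)) + (1/2 : ℝ≥0)*(b^(2:ℝ))
            = ((b+c)^(2:ℝ) + b^(2:ℝ))/2 := by
          generalize (b+c)^(2:ℝ) = u; generalize b^(2:ℝ) = v
          apply NNReal.coe_injective; push_cast; ring
        have e2 : (1/2 : ℝ≥0)*((b+c)^q) + (1/2 : ℝ≥0)*(b^q) = ((b+c)^q + b^q)/2 := by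
          generalize (b+c)^q = u; generalize b^q = v
          apply NNReal.coe_injective; push_cast; ring
        rw [e, e2] at h2; exact h2
      have h5 := NNReal.rpow_le_rpow h4 (by positivity : (0:ℝ) ≤ 2/q)
      rw [← NNReal.rpow_mul, show (q/2)*((2:ℝ)/q) = 1 by field_simp, NNReal.rpow_one] at h5
      calc (b+c)^(2:ℝ) + b^(2:ℝ) = 2 * (((b+c)^(2:ℝ) + b^(2:ℝ))/2) := by
            generalize (b+c)^(2:ℝ) = u; generalize b^(2:ℝ) = v
            apply NNReal.coe_injective; push_cast; ring
        _ ≤ 2 * ((((b+c)^q + b^q)/2)^((2:ℝ)/q)) := mul_le_mul_right h5 2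
    calc (2*((b+c)^(2:ℝ) + b^(2:ℝ)))^(q/(2:ℝ))
        ≤ (2*(2 * (((b+c)^q + b^q)/2)^((2:ℝ)/q)))^(q/(2:ℝ)) := by
          apply NNReal.rpow_le_rpow _ (by positivity)
          exact mul_le_mul_right hmean 2
      _ = (4:ℝ≥0)^(q/(2:ℝ)) * (((b+c)^q + b^q)/2) := by
          have e0 : 2*(2 * (((b+c)^q + b^q)/2)^((2:ℝ)/q)) = 4*(((b+c)^q + b^q)/2)^((2:ℝ)/q) := by
            generalize (((b+c)^q + b^q)/2)^((2:ℝ)/q) = M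
            apply NNReal.coe_injective; push_cast; ring
          rw [e0, NNReal.mul_rpow, ← NNReal.rpow_mul,
            show ((2:ℝ)/q)*(q/2) = 1 by rw [div_mul_div_comm, mul_comm]; exact div_self (by positivity),
            NNReal.rpow_one]
      _ = (2:ℝ≥0)^(q-1) * ((b+c)^q + b^q) := by
          have e4 : (4:ℝ≥0) = 2^(2:ℝ) := by
            rw [NNReal.rpow_two]; apply NNReal.coe_injective; push_cast; norm_num
          rw [e4, ← NNReal.rpow_mul, show (2:ℝ)*(q/2) = q by ring,
            show q - 1 = q - (1:ℝ) from rfl, NNReal.rpow_sub two_ne_zero, NNReal.rpow_one]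
          generalize (2:ℝ≥0)^q = A
          generalize (b+c)^q + b^q = S
          apply NNReal.coe_injective; push_cast; ring
  exact h1'.trans h3

lemma clarkson_real {q : ℝ} (hq : 2 ≤ q) {a b : ℝ} (ha : 0 ≤ b) (hb : b ≤ a) :
    (a+b)^q + (a-b)^q ≤ 2^(q-1) * (a^q + b^q) := by
  have ha0 : (0:ℝ) ≤ a := ha.trans hb
  set B : ℝ≥0 := ⟨b, ha⟩
  set C : ℝ≥0 := ⟨a - b, by linarith⟩
  have key := clarkson_nnreal hq B C
  have h1 : ((2*B+C : ℝ≥0) : ℝ) = a + b := by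
    rw [NNReal.coe_add, NNReal.coe_mul, NNReal.coe_ofNat]; change 2 * b + (a - b) = a + b; ring
  have h2 : ((B+C : ℝ≥0) : ℝ) = a := by rw [NNReal.coe_add]; change b + (a - b) = a; ring
  have := NNReal.coe_le_coe.2 key
  rw [NNReal.coe_mul] at this
  rw [NNReal.coe_add, NNReal.coe_add, NNReal.coe_rpow, NNReal.coe_rpow, NNReal.coe_rpow,
    NNReal.coe_rpow, NNReal.coe_rpow, h1, h2] at this
  change (a + b) ^ q + (a - b) ^ q ≤ 2 ^ (q - 1) * (a ^ q + b ^ q) at this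
  exact this

lemma rpow_sub_le_rpow_sub {q : ℝ} (hq : 1 ≤ q) {a b : ℝ} (hb : 0 ≤ b) (hba : b ≤ a) :
    (a - b)^q ≤ a^q - b^q := by
  set B : ℝ≥0 := ⟨b, hb⟩
  set C : ℝ≥0 := ⟨a - b, by linarith⟩
  have key := NNReal.add_rpow_le_rpow_add C B hq
  have := NNReal.coe_le_coe.2 key
  rw [NNReal.coe_add, NNReal.coe_rpow, NNReal.coe_rpow, NNReal.coe_rpow] at this
  have h2 : ((C+B : ℝ≥0) : ℝ) = a := by rw [NNReal.coe_add]; change (a - b) + b = a; ring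
  rw [h2] at this
  change (a - b) ^ q + b ^ q ≤ a ^ q at this
  linarith

end Scalar

section Le2
open Real

lemma sinh_logconcave {θ s t : ℝ} (hθ : 0 ≤ θ) (hθ1 : θ ≤ 1) (hs : 0 < s) (ht : 0 < t) :
    Real.sinh s ^ θ * Real.sinh t ^ (1-θ) ≤ Real.sinh (θ*s + (1-θ)*t) := by
  have hconc : ConcaveOn ℝ (Set.Ioi 0) (fun x => Real.log (Real.sinh x)) := by
    have hderiv : ∀ x ∈ Set.Ioi (0:ℝ), HasDerivAt (fun x => Real.log (Real.sinh x))
        (Real.cosh x / Real.sinh x) x := fun x hx =>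
      (Real.hasDerivAt_sinh x).log (Real.sinh_pos_iff.2 hx).ne'
    have hg : ∀ x ∈ Set.Ioi (0:ℝ), HasDerivAt (fun x => Real.cosh x / Real.sinh x)
        ((Real.sinh x * Real.sinh x - Real.cosh x * Real.cosh x) / (Real.sinh x)^2) x := fun x hx =>
      (Real.hasDerivAt_cosh x).div (Real.hasDerivAt_sinh x) (Real.sinh_pos_iff.2 hx).ne'
    have hEq : Set.EqOn (deriv (fun x => Real.log (Real.sinh x)))
        (fun x => Real.cosh x / Real.sinh x) (Set.Ioi 0) := fun x hx => (hderiv x hx).deriv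
    apply concaveOn_of_deriv2_nonpos (convex_Ioi 0)
    · exact Real.continuous_sinh.continuousOn.log fun x hx => (Real.sinh_pos_iff.2 hx).ne'
    · intro x hx
      rw [interior_Ioi] at hx
      exact (hderiv x hx).differentiableAt.differentiableWithinAt
    · intro x hx
      rw [interior_Ioi] at hx
      apply DifferentiableAt.differentiableWithinAt
      have : deriv (fun x => Real.log (Real.sinh x)) =ᶠ[nhds x]
          (fun x => Real.cosh x / Real.sinh x) :=
        Filter.eventuallyEq_of_mem (isOpen_Ioi.mem_nhds hx) hEq
      exact ((hg x hx).differentiableAt).congr_of_eventuallyEq this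
    · intro x hx
      rw [interior_Ioi] at hx
      have e1 : deriv^[2] (fun x => Real.log (Real.sinh x)) x
          = deriv (deriv (fun x => Real.log (Real.sinh x))) x := rfl
      have : deriv (fun x => Real.log (Real.sinh x)) =ᶠ[nhds x]
          (fun x => Real.cosh x / Real.sinh x) :=
        Filter.eventuallyEq_of_mem (isOpen_Ioi.mem_nhds hx) hEq
      rw [e1, this.deriv_eq, (hg x hx).deriv]
      apply div_nonpos_iff.2
      right
      constructor
      · nlinarith [Real.cosh_sq_sub_sinh_sq x]
      · positivity
  have hb' : (0:ℝ) ≤ 1 - θ := by linarith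
  have hab : θ + (1 - θ) = 1 := by ring
  have hchord := hconc.2 (Set.mem_Ioi.2 hs) (Set.mem_Ioi.2 ht) hθ hb' hab
  simp only [smul_eq_mul] at hchord
  have hmem : 0 < θ*s + (1-θ)*t := by
    have h1 : min s t ≤ θ*s + (1-θ)*t := by
      nlinarith [min_le_left s t, min_le_right s t]
    exact lt_of_lt_of_le (lt_min hs ht) h1
  calc Real.sinh s ^ θ * Real.sinh t ^ (1-θ)
      = Real.exp (θ * Real.log (Real.sinh s) + (1-θ) * Real.log (Real.sinh t)) := by
        rw [Real.exp_add, Real.rpow_def_of_pos (Real.sinh_pos_iff.2 hs),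
          Real.rpow_def_of_pos (Real.sinh_pos_iff.2 ht), mul_comm θ, mul_comm (1-θ)]
    _ ≤ Real.exp (Real.log (Real.sinh (θ*s + (1-θ)*t))) := Real.exp_le_exp.2 hchord
    _ = Real.sinh (θ*s + (1-θ)*t) := Real.exp_log (Real.sinh_pos_iff.2 hmem)

lemma key_deriv_ineq {q s : ℝ} (hq1 : 1 ≤ q) (hq2 : q ≤ 2) (hs : 0 < s) :
    (2*Real.cosh s)^(q-1) * Real.sinh s ≤ Real.sinh (q*s) := by
  rcases eq_or_lt_of_le hq1 with rfl | hq1'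
  · simp
  have h2s : (0:ℝ) < 2*s := by linarith
  have key := sinh_logconcave (θ := 2 - q) (by linarith) (by linarith) hs h2s
  have harg : (2-q)*s + (1-(2-q))*(2*s) = q*s := by ring
  rw [harg] at key
  have hsinh2 : Real.sinh (2*s) = 2 * Real.sinh s * Real.cosh s := Real.sinh_two_mul s
  have hshpos := Real.sinh_pos_iff.2 hs
  have hchpos := Real.cosh_pos (x := s)
  rw [hsinh2, show (1 - (2-q)) = q - 1 by ring] at key
  refine le_trans (le_of_eq ?_) key
  calc (2*Real.cosh s)^(q-1) * Real.sinh s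
      = (2*Real.cosh s)^(q-1) * (Real.sinh s ^ ((2-q) + (q-1))) := by
        rw [show (2-q) + (q-1) = (1:ℝ) by ring, Real.rpow_one]
    _ = Real.sinh s ^ (2-q) * ((2*Real.cosh s)^(q-1) * Real.sinh s ^ (q-1)) := by
        rw [Real.rpow_add hshpos]; ring
    _ = Real.sinh s ^ (2-q) * (2 * Real.sinh s * Real.cosh s) ^ (q-1) := by
        rw [show 2 * Real.sinh s * Real.cosh s = (2*Real.cosh s) * (Real.sinh s) by ring,
          Real.mul_rpow (by positivity) hshpos.le]

lemma phi_nonneg {q : ℝ} (hq1 : 1 ≤ q) (hq2 : q ≤ 2) {s : ℝ} (hs : 0 ≤ s) :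
    (2*Real.cosh s)^q ≤ 2*Real.cosh (q*s) + (2^q - 2) := by
  set Φ : ℝ → ℝ := fun x => 2*Real.cosh (q*x) + ((2:ℝ)^q - 2) - (2*Real.cosh x)^q with hΦ
  have hq0 : (0:ℝ) < q := by linarith
  have hderiv : ∀ x, HasDerivAt Φ
      (2*(Real.sinh (q*x) * q) - q*(2*Real.cosh x)^(q-1)*(2*Real.sinh x)) x := by
    intro x
    have h1 : HasDerivAt (fun x => Real.cosh (q*x)) (Real.sinh (q*x) * q) x := by
      have := (Real.hasDerivAt_cosh (q*x)).comp x ((hasDerivAt_id x).const_mul q)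
      simpa [mul_comm, Function.comp_def] using this
    have h2 : HasDerivAt (fun x => (2*Real.cosh x)^q) (q*(2*Real.cosh x)^(q-1)*(2*Real.sinh x)) x := by
      have hb : HasDerivAt (fun x => 2*Real.cosh x) (2*Real.sinh x) x :=
        (Real.hasDerivAt_cosh x).const_mul 2
      have := hb.rpow_const (p := q) (Or.inl (by positivity))
      convert this using 1
      ring
    exact ((h1.const_mul 2).add_const ((2:ℝ)^q - 2)).sub h2
  have hmono : MonotoneOn Φ (Set.Ici 0) := by
    apply monotoneOn_of_deriv_nonneg (convex_Ici 0)
    · refine Continuous.continuousOn ?_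
      refine Continuous.sub (Continuous.add ?_ continuous_const)
        ((continuous_const.mul Real.continuous_cosh).rpow_const fun x => Or.inl (mul_pos two_pos (Real.cosh_pos x)).ne')
      exact continuous_const.mul (Real.continuous_cosh.comp (continuous_const.mul continuous_id))
    · intro x hx
      exact (hderiv x).differentiableAt.differentiableWithinAt
    · intro x hx
      rw [interior_Ici] at hx
      rw [(hderiv x).deriv]
      have hki := key_deriv_ineq hq1 hq2 (Set.mem_Ioi.1 hx)
      nlinarith
  have h0 : Φ 0 = 0 := by
    simp only [hΦ, mul_zero, Real.cosh_zero, mul_one]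
    ring
  have := hmono (Set.mem_Ici.2 le_rfl) (Set.mem_Ici.2 hs) hs
  rw [h0] at this
  simp only [hΦ] at this
  linarith

lemma scalar_le2_aux {q a b : ℝ} (hq1 : 1 ≤ q) (hq2 : q ≤ 2) (hb : 0 < b) (hba : b ≤ a) :
    (a+b)^q ≤ a^q + b^q + (2^q - 2) * (a*b)^(q/2) := by
  have ha : 0 < a := lt_of_lt_of_le hb hba
  set u := Real.log a
  set v := Real.log b
  have hau : a = Real.exp u := (Real.exp_log ha).symm
  have hbv : b = Real.exp v := (Real.exp_log hb).symm
  have hvu : v ≤ u := Real.log_le_log hb hba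
  set s := (u - v)/2 with hsdef
  have hs : 0 ≤ s := by simp only [hsdef]; linarith
  have key := phi_nonneg hq1 hq2 hs
  have hc : (0:ℝ) < Real.exp ((u+v)/2) := Real.exp_pos _
  have hcosh : Real.exp ((u+v)/2) * (2*Real.cosh s) = a + b := by
    have e : Real.exp ((u+v)/2) * (2*Real.cosh s)
        = Real.exp ((u+v)/2) * Real.exp s + Real.exp ((u+v)/2) * Real.exp (-s) := by
      rw [Real.cosh_eq]; ring
    rw [e, ← Real.exp_add, ← Real.exp_add, hsdef,
      show (u+v)/2 + (u-v)/2 = u by ring, show (u+v)/2 + -((u-v)/2) = v by ring, hau, hbv]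
  have hcoshq : Real.exp ((u+v)/2)^q * (2*Real.cosh (q*s)) = a^q + b^q := by
    have e1 : Real.exp ((u+v)/2)^q = Real.exp ((u+v)/2*q) := (Real.exp_mul _ q).symm
    rw [e1, Real.cosh_eq]
    rw [show Real.exp ((u+v)/2*q) * (2*((Real.exp (q*s) + Real.exp (-(q*s)))/2))
        = Real.exp ((u+v)/2*q) * Real.exp (q*s) + Real.exp ((u+v)/2*q) * Real.exp (-(q*s)) by ring]
    rw [← Real.exp_add, ← Real.exp_add, hsdef, show (u+v)/2*q + q*((u-v)/2) = u*q by ring,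
      show (u+v)/2*q + -(q*((u-v)/2)) = v*q by ring, Real.exp_mul, Real.exp_mul, hau, hbv]
  have hcq : Real.exp ((u+v)/2)^q = (a*b)^(q/2) := by
    rw [hau, hbv, ← Real.exp_add, ← Real.exp_mul, ← Real.exp_mul,
      show (u+v)/2*q = (u+v)*(q/2) by ring]
  have hmul := mul_le_mul_of_nonneg_left key (le_of_lt (Real.rpow_pos_of_pos hc q))
  rw [← Real.mul_rpow (by positivity) (by positivity), hcosh] at hmul
  rw [mul_add, mul_sub, hcoshq, hcq] at hmul
  calc (a+b)^q ≤ a^q + b^q + ((a*b)^(q/2) * 2^q - (a*b)^(q/2)*2) := hmul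
    _ = a^q + b^q + (2^q - 2) * (a*b)^(q/2) := by ring

lemma scalar_le2 {q a b : ℝ} (hq1 : 1 ≤ q) (hq2 : q ≤ 2) (ha : 0 ≤ a) (hb : 0 ≤ b) :
    (a+b)^q ≤ a^q + b^q + (2^q - 2) * (a*b)^(q/2) := by
  have hq0 : q ≠ 0 := by linarith
  have h2q : (0:ℝ) ≤ 2^q - 2 := by
    have : (2:ℝ)^(1:ℝ) ≤ 2^q := Real.rpow_le_rpow_left_iff (by norm_num) |>.2 hq1
    rw [Real.rpow_one] at this; linarith
  rcases eq_or_lt_of_le ha with rfl | ha'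
  · simp [Real.zero_rpow hq0]
    positivity
  rcases eq_or_lt_of_le hb with rfl | hb'
  · simp [Real.zero_rpow hq0, Real.zero_rpow (by positivity : q/2 ≠ 0)]
  rcases le_total b a with h | h
  · exact scalar_le2_aux hq1 hq2 hb' h
  · have := scalar_le2_aux hq1 hq2 ha' h
    calc (a+b)^q = (b+a)^q := by rw [add_comm]
      _ ≤ b^q + a^q + (2^q-2)*(b*a)^(q/2) := this
      _ = a^q + b^q + (2^q-2)*(a*b)^(q/2) := by rw [mul_comm b a]; ring
end Le2


section Basic
variable {G : Type*} [Group G] [DecidableEq G] {p : ℝ≥0∞} [Fact (1 ≤ p)]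

lemma p_ne_zero : p ≠ 0 := (zero_lt_one.trans_le (Fact.out : 1 ≤ p)).ne'

/-- evaluation at a point as a CLM -/
noncomputable def evalCLM (x : G) : lp (fun _ : G => ℂ) p →L[ℂ] ℂ :=
  LinearMap.mkContinuous
    { toFun := fun f => f x
      map_add' := fun f g => congrFun (lp.coeFn_add f g) x
      map_smul' := fun c f => congrFun (lp.coeFn_smul c f) x }
    1 (fun f => by simpa using lp.norm_apply_le_norm p_ne_zero f x)

@[simp] lemma evalCLM_apply (x : G) (f : lp (fun _ : G => ℂ) p) : evalCLM x f = f x := rfl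

variable (hp' : p ≠ ⊤) {lam : G → (lp (fun _ : G => ℂ) p →L[ℂ] lp (fun _ : G => ℂ) p)}
  (hlam : IsLeftReg lam)

include hlam in
lemma lam_single (s t : G) (c : ℂ) :
    lam s (lp.single (E := fun _ : G => ℂ) p t c) = lp.single (E := fun _ : G => ℂ) p (s * t) c := by
  have h1 : lp.single (E := fun _ : G => ℂ) p t c = c • lp.single (E := fun _ : G => ℂ) p t 1 := by
    rw [← lp.single_smul (E := fun _ : G => ℂ) p t c (1:ℂ), smul_eq_mul, mul_one]
  have h2 : lp.single (E := fun _ : G => ℂ) p (s*t) c = c • lp.single (E := fun _ : G => ℂ) p (s*t) 1 := by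
    rw [← lp.single_smul (E := fun _ : G => ℂ) p (s*t) c (1:ℂ), smul_eq_mul, mul_one]
  rw [h1, h2, (lam s).map_smul, hlam s t]

set_option maxHeartbeats 1000000 in
include hp' hlam in
lemma lam_coord (s : G) (f : lp (fun _ : G => ℂ) p) (x : G) :
    (lam s f : ∀ _ : G, ℂ) x = f (s⁻¹ * x) := by
  have h := lp.hasSum_single hp' f
  have h2 : HasSum (fun t => lp.single (E := fun _ : G => ℂ) p (s * t) (f t)) (lam s f) := by
    have := (lam s).hasSum h
    simpa only [lam_single hlam] using this
  have h3 : HasSum (fun t => (lp.single (E := fun _ : G => ℂ) p (s * t) (f t) : ∀ _ : G, ℂ) x)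
      ((lam s f : ∀ _ : G, ℂ) x) := (evalCLM x).hasSum h2
  have h4 : HasSum (fun t => (lp.single (E := fun _ : G => ℂ) p (s * t) (f t) : ∀ _ : G, ℂ) x)
      (f (s⁻¹ * x)) := by
    have : ∀ t : G, t ≠ s⁻¹ * x → (lp.single (E := fun _ : G => ℂ) p (s * t) (f t) : ∀ _ : G, ℂ) x = 0 := by
      intro t ht
      rw [lp.single_apply]
      have : x ≠ s * t := fun hx => ht (by rw [hx]; group)
      simp [this]
    have h5 := hasSum_single (f := fun t => (lp.single (E := fun _ : G => ℂ) p (s * t) (f t) : ∀ _ : G, ℂ) x) (s⁻¹ * x) this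
    have h6 : (lp.single (E := fun _ : G => ℂ) p (s * (s⁻¹ * x)) (f (s⁻¹ * x)) : ∀ _ : G, ℂ) x = f (s⁻¹ * x) := by
      have hx : s * (s⁻¹ * x) = x := by group
      rw [hx, lp.single_apply]; simp
    simpa only [h6] using h5
  exact h3.unique h4

include hp' hlam in
lemma lam_norm (s : G) (f : lp (fun _ : G => ℂ) p) (hq : 0 < p.toReal) : ‖lam s f‖ = ‖f‖ := by
  have h1 := lp.hasSum_norm hq (lam s f)
  have h2 := lp.hasSum_norm hq f
  have h3 : HasSum (fun x : G => ‖f (s⁻¹ * x)‖ ^ p.toReal) (‖lam s f‖ ^ p.toReal) := by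
    simpa only [lam_coord hp' hlam] using h1
  have h4 : HasSum (fun x : G => ‖f (s⁻¹ * x)‖ ^ p.toReal) (‖f‖ ^ p.toReal) := by
    have := (Equiv.mulLeft s⁻¹ : G ≃ G).hasSum_iff (f := fun x : G => ‖f x‖ ^ p.toReal) (a := ‖f‖ ^ p.toReal)
    exact this.2 h2
  have := h3.unique h4
  have e1 := Real.rpow_rpow_inv (norm_nonneg (lam s f)) hq.ne'
  have e2 := Real.rpow_rpow_inv (norm_nonneg f) hq.ne'
  rw [← e1, ← e2, this]

include hp' hlam in
lemma lam_one_apply (f : lp (fun _ : G => ℂ) p) : lam 1 f = f := by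
  refine lp.ext (funext fun x => ?_)
  rw [lam_coord hp' hlam, inv_one, one_mul]

lemma norm_le_of_coord (hq : 0 < p.toReal) {f g : lp (fun _ : G => ℂ) p}
    (h : ∀ x, ‖(f : ∀ _ : G, ℂ) x‖ ≤ ‖(g : ∀ _ : G, ℂ) x‖) : ‖f‖ ≤ ‖g‖ := by
  have h1 := lp.hasSum_norm hq f
  have h2 := lp.hasSum_norm hq g
  have h3 : ‖f‖ ^ p.toReal ≤ ‖g‖ ^ p.toReal :=
    hasSum_le (fun x => Real.rpow_le_rpow (norm_nonneg _) (h x) hq.le) h1 h2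
  by_contra hc
  exact absurd h3 (not_le.2 (Real.rpow_lt_rpow (norm_nonneg g) (not_le.1 hc) hq))

include hp' hlam in
lemma lam_opNorm_le (hq : 0 < p.toReal) (s : G) : ‖lam s‖ ≤ 1 :=
  (lam s).opNorm_le_bound zero_le_one fun f => by rw [lam_norm hp' hlam s f hq, one_mul]

include hp' hlam in
lemma sum_lam_opNorm_le (hq : 0 < p.toReal) (E : Finset G) :
    ‖∑ t ∈ E, lam t‖ ≤ (E.card : ℝ) := by
  calc ‖∑ t ∈ E, lam t‖ ≤ ∑ t ∈ E, ‖lam t‖ := norm_sum_le _ _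
    _ ≤ ∑ _t ∈ E, (1:ℝ) := Finset.sum_le_sum fun t _ => lam_opNorm_le hp' hlam hq t
    _ = E.card := by simp

include hp' hlam in
lemma sum_lam_coord (E : Finset G) (f : lp (fun _ : G => ℂ) p) (x : G) :
    (((∑ t ∈ E, lam t) f : lp (fun _ : G => ℂ) p) : ∀ _ : G, ℂ) x
      = ∑ t ∈ E, (f : ∀ _ : G, ℂ) (t⁻¹ * x) := by
  rw [ContinuousLinearMap.sum_apply]
  have : (evalCLM x) (∑ t ∈ E, lam t f) = ∑ t ∈ E, (evalCLM x) (lam t f) := map_sum _ _ _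
  rw [show ((((∑ t ∈ E, (lam t) f) : lp (fun _ : G => ℂ) p)) : ∀ _ : G, ℂ) x = (evalCLM x) (∑ t ∈ E, lam t f) from rfl, this]
  exact Finset.sum_congr rfl fun t _ => lam_coord hp' hlam t f x

/-- the coordinatewise absolute value of a vector -/
noncomputable def absv (f : lp (fun _ : G => ℂ) p) (hq : 0 < p.toReal) : lp (fun _ : G => ℂ) p :=
  ⟨fun x => ((‖(f : ∀ _ : G, ℂ) x‖ : ℝ) : ℂ), by
    apply memℓp_gen
    have := (lp.hasSum_norm hq f).summable
    simpa [Complex.norm_real] using this⟩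

lemma absv_coord (f : lp (fun _ : G => ℂ) p) (hq : 0 < p.toReal) (x : G) :
    ((absv f hq : lp (fun _ : G => ℂ) p) : ∀ _ : G, ℂ) x = ((‖(f : ∀ _ : G, ℂ) x‖ : ℝ) : ℂ) := rfl

lemma absv_norm (f : lp (fun _ : G => ℂ) p) (hq : 0 < p.toReal) : ‖absv f hq‖ = ‖f‖ := by
  have h1 := lp.hasSum_norm hq (absv f hq)
  have h2 := lp.hasSum_norm hq f
  have h3 : HasSum (fun x : G => ‖(f : ∀ _ : G, ℂ) x‖ ^ p.toReal) (‖absv f hq‖ ^ p.toReal) := by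
    simpa [absv_coord, Complex.norm_real] using h1
  have h4 := h3.unique h2
  rw [← Real.rpow_rpow_inv (norm_nonneg (absv f hq)) hq.ne', ← Real.rpow_rpow_inv (norm_nonneg f) hq.ne', h4]

include hp' hlam in
lemma forward_dir (hq : 0 < p.toReal) {ι : Type*} {l : Filter ι} (hl : l.NeBot)
    (fα : ι → lp (fun _ : G => ℂ) p) (hunit : ∀ α, ‖fα α‖ = 1)
    (htend : ∀ s : G, Tendsto (fun α => ‖lam s (fα α) - fα α‖) l (𝓝 0)) (E : Finset G) :
    ‖∑ t ∈ E, lam t‖ = (E.card : ℝ) := by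
  refine le_antisymm (sum_lam_opNorm_le hp' hlam hq E) ?_
  have key : ∀ α, (E.card : ℝ) - ∑ t ∈ E, ‖lam t (fα α) - fα α‖ ≤ ‖∑ t ∈ E, lam t‖ := by
    intro α
    have hdecomp : (∑ t ∈ E, lam t) (fα α) = (E.card : ℂ) • fα α + ∑ t ∈ E, (lam t (fα α) - fα α) := by
      rw [ContinuousLinearMap.sum_apply, Finset.sum_sub_distrib, Finset.sum_const,
        Nat.cast_smul_eq_nsmul]
      abel
    have h1 : ‖(∑ t ∈ E, lam t) (fα α)‖ ≤ ‖∑ t ∈ E, lam t‖ := by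
      have := (∑ t ∈ E, lam t).le_opNorm (fα α)
      rwa [hunit α, mul_one] at this
    have h2 : (E.card : ℝ) - ∑ t ∈ E, ‖lam t (fα α) - fα α‖ ≤ ‖(∑ t ∈ E, lam t) (fα α)‖ := by
      have hn : ‖(E.card : ℂ) • fα α‖ = (E.card : ℝ) := by
        rw [norm_smul, hunit α, mul_one, Complex.norm_natCast]
      calc (E.card : ℝ) - ∑ t ∈ E, ‖lam t (fα α) - fα α‖
          ≤ ‖(E.card : ℂ) • fα α‖ - ‖∑ t ∈ E, (lam t (fα α) - fα α)‖ := by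
            have := norm_sum_le E (fun t => lam t (fα α) - fα α)
            rw [hn]; linarith
        _ ≤ ‖(E.card : ℂ) • fα α + ∑ t ∈ E, (lam t (fα α) - fα α)‖ := by
            have := norm_add_le ((E.card : ℂ) • fα α + ∑ t ∈ E, (lam t (fα α) - fα α)) (-(∑ t ∈ E, (lam t (fα α) - fα α)))
            simp only [add_neg_cancel_right, norm_neg] at this
            linarith
        _ = ‖(∑ t ∈ E, lam t) (fα α)‖ := by rw [hdecomp]
    linarith
  have herr : Tendsto (fun α => (E.card : ℝ) - ∑ t ∈ E, ‖lam t (fα α) - fα α‖) l (𝓝 ((E.card : ℝ))) := by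
    have : Tendsto (fun α => ∑ t ∈ E, ‖lam t (fα α) - fα α‖) l (𝓝 0) := by
      have := tendsto_finset_sum E (fun t _ => htend t)
      simpa using this
    have := tendsto_const_nhds (α := ι) (f := l) (x := (E.card : ℝ)) |>.sub this
    simpa using this
  exact le_of_tendsto herr (Eventually.of_forall key)

end Basic




section ScalarExtra

lemma clarkson_abs {q A B : ℝ} (hq : 2 ≤ q) (hA : 0 ≤ A) (hB : 0 ≤ B)
    (hcl : ∀ {a b : ℝ}, 0 ≤ b → b ≤ a → (a+b)^q + (a-b)^q ≤ 2^(q-1) * (a^q + b^q)) :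
    (A+B)^q + |A-B|^q ≤ 2^(q-1)*(A^q+B^q) := by
  rcases le_total B A with h | h
  · rw [abs_of_nonneg (by linarith)]
    exact hcl hB h
  · rw [abs_of_nonpos (by linarith), neg_sub]
    calc (A+B)^q + (B-A)^q = (B+A)^q + (B-A)^q := by rw [add_comm A B]
      _ ≤ 2^(q-1) * (B^q + A^q) := hcl hA h
      _ = 2^(q-1) * (A^q + B^q) := by ring

lemma sq_rpow {q A : ℝ} (hA : 0 ≤ A) : (A^(q/2))^2 = A^q := by
  rw [← Real.rpow_natCast (A^(q/2)) 2, ← Real.rpow_mul hA]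
  norm_num

lemma amgm_rpow {q A B : ℝ} (hA : 0 ≤ A) (hB : 0 ≤ B) :
    (A*B)^(q/2) ≤ (A^q + B^q)/2 := by
  rw [Real.mul_rpow hA hB]
  have hx : 0 ≤ A^(q/2) := Real.rpow_nonneg hA _
  have hy : 0 ≤ B^(q/2) := Real.rpow_nonneg hB _
  have h1 := sq_rpow (q := q) hA
  have h2 := sq_rpow (q := q) hB
  nlinarith [sq_nonneg (A^(q/2) - B^(q/2))]

lemma abs_sub_rpow_le_aux {q A B : ℝ} (hq : 1 ≤ q) (hB : 0 ≤ B) (hBA : B ≤ A) :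
    |A-B|^q ≤ |A^(q/2) - B^(q/2)| * (A^(q/2) + B^(q/2)) := by
  have hA : 0 ≤ A := hB.trans hBA
  have hxy : B^(q/2) ≤ A^(q/2) := Real.rpow_le_rpow hB hBA (by positivity)
  rw [abs_of_nonneg (by linarith), abs_of_nonneg (by linarith)]
  have h1 : (A-B)^q ≤ A^q - B^q := by
    set C : ℝ≥0 := ⟨B, hB⟩
    set D : ℝ≥0 := ⟨A - B, by linarith⟩
    have key := NNReal.add_rpow_le_rpow_add D C hq
    have := NNReal.coe_le_coe.2 key
    rw [NNReal.coe_add, NNReal.coe_rpow, NNReal.coe_rpow, NNReal.coe_rpow] at this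
    have h2 : ((D+C : ℝ≥0) : ℝ) = A := by rw [NNReal.coe_add]; change (A - B) + B = A; ring
    rw [h2] at this
    change (A - B) ^ q + B ^ q ≤ A ^ q at this
    linarith
  have h2 : A^q - B^q = (A^(q/2) - B^(q/2)) * (A^(q/2) + B^(q/2)) := by
    have e1 := sq_rpow (q := q) (A := A) (le_trans hB hBA)
    have e2 := sq_rpow (q := q) (A := B) hB
    nlinarith [e1, e2]
  rw [← h2]
  exact h1

lemma abs_sub_rpow_le {q A B : ℝ} (hq : 1 ≤ q) (hA : 0 ≤ A) (hB : 0 ≤ B) :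
    |A-B|^q ≤ |A^(q/2) - B^(q/2)| * (A^(q/2) + B^(q/2)) := by
  rcases le_total B A with h | h
  · exact abs_sub_rpow_le_aux hq hB h
  · rw [abs_sub_comm, abs_sub_comm (A^(q/2)), add_comm (A^(q/2))]
    exact abs_sub_rpow_le_aux hq hA h

lemma nonneg_complex_eq {z : ℂ} (hz : 0 ≤ z) : z = ((‖z‖ : ℝ) : ℂ) := by
  obtain ⟨hre, him⟩ := Complex.nonneg_iff.1 hz
  have h1 : z = ((z.re : ℝ) : ℂ) := Complex.ext rfl (by simp [← him])
  rw [h1, Complex.norm_real, Real.norm_eq_abs, abs_of_nonneg hre]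

end ScalarExtra

section Convexity
variable {G : Type*} {p : ℝ≥0∞} [Fact (1 ≤ p)]

lemma coord_add_norm {u v : lp (fun _ : G => ℂ) p}
    (hu : ∀ x, 0 ≤ (u : ∀ _:G, ℂ) x) (hv : ∀ x, 0 ≤ (v : ∀ _:G, ℂ) x) (x : G) :
    ‖(↑(u + v) : ∀ _:G, ℂ) x‖ = ‖(u:∀ _:G,ℂ) x‖ + ‖(v:∀ _:G,ℂ) x‖ := by
  have hx : (↑(u+v) : ∀ _:G, ℂ) x = (u:∀ _:G,ℂ) x + (v:∀ _:G,ℂ) x := congrFun (lp.coeFn_add u v) x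
  rw [hx]
  conv_lhs => rw [nonneg_complex_eq (hu x), nonneg_complex_eq (hv x), ← Complex.ofReal_add]
  rw [Complex.norm_real, Real.norm_eq_abs, abs_of_nonneg (by positivity)]

lemma coord_sub_norm {u v : lp (fun _ : G => ℂ) p}
    (hu : ∀ x, 0 ≤ (u : ∀ _:G, ℂ) x) (hv : ∀ x, 0 ≤ (v : ∀ _:G, ℂ) x) (x : G) :
    ‖(↑(u - v) : ∀ _:G, ℂ) x‖ = |‖(u:∀ _:G,ℂ) x‖ - ‖(v:∀ _:G,ℂ) x‖| := by
  have hx : (↑(u-v) : ∀ _:G, ℂ) x = (u:∀ _:G,ℂ) x - (v:∀ _:G,ℂ) x := congrFun (lp.coeFn_sub u v) x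
  rw [hx]
  conv_lhs => rw [nonneg_complex_eq (hu x), nonneg_complex_eq (hv x), ← Complex.ofReal_sub]
  rw [Complex.norm_real, Real.norm_eq_abs]

lemma lp_clarkson (hq2 : 2 ≤ p.toReal) {u v : lp (fun _ : G => ℂ) p}
    (hu : ∀ x, 0 ≤ (u : ∀ _:G, ℂ) x) (hv : ∀ x, 0 ≤ (v : ∀ _:G, ℂ) x) :
    ‖u+v‖^p.toReal + ‖u-v‖^p.toReal ≤ 2^(p.toReal - 1) * (‖u‖^p.toReal + ‖v‖^p.toReal) := by
  have hq0 : 0 < p.toReal := lt_of_lt_of_le two_pos hq2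
  have h1 := (lp.hasSum_norm hq0 (u+v)).add (lp.hasSum_norm hq0 (u-v))
  have h2 := ((lp.hasSum_norm hq0 u).add (lp.hasSum_norm hq0 v)).mul_left ((2:ℝ)^(p.toReal-1))
  refine hasSum_le (fun x => ?_) h1 h2
  rw [coord_add_norm hu hv x, coord_sub_norm hu hv x]
  exact clarkson_abs hq2 (norm_nonneg _) (norm_nonneg _)
    (fun hb hba => clarkson_real hq2 hb hba)

lemma lp_le2 (hq1 : 1 ≤ p.toReal) (hq2 : p.toReal ≤ 2) {u v : lp (fun _ : G => ℂ) p}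
    (hu : ∀ x, 0 ≤ (u : ∀ _:G, ℂ) x) (hv : ∀ x, 0 ≤ (v : ∀ _:G, ℂ) x)
    (hun : ‖u‖ = 1) (hvn : ‖v‖ = 1) :
    ∃ θ : ℝ, 0 ≤ 2 - 2*θ ∧ ‖u+v‖^p.toReal ≤ 2 + (2^p.toReal - 2)*θ ∧
      ‖u-v‖^p.toReal ≤ 2*Real.sqrt (2-2*θ) := by
  haveI : Fact ((1:ℝ≥0∞) ≤ 2) := ⟨by norm_num⟩
  set q := p.toReal with hqdef
  have hq0 : 0 < q := lt_of_lt_of_le zero_lt_one hq1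
  set a : G → ℝ := fun x => ‖(u:∀ _:G,ℂ) x‖ with ha
  set b : G → ℝ := fun x => ‖(v:∀ _:G,ℂ) x‖ with hb
  have hA : HasSum (fun x => a x^q) 1 := by
    have := lp.hasSum_norm hq0 u
    rwa [hun, Real.one_rpow] at this
  have hB : HasSum (fun x => b x^q) 1 := by
    have := lp.hasSum_norm hq0 v
    rwa [hvn, Real.one_rpow] at this
  have hann : ∀ x, 0 ≤ a x := fun x => norm_nonneg _
  have hbnn : ∀ x, 0 ≤ b x := fun x => norm_nonneg _
  have hsumab : Summable (fun x => (a x * b x)^(q/2)) := by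
    apply Summable.of_nonneg_of_le (fun x => by positivity)
      (fun x => amgm_rpow (hann x) (hbnn x))
    exact ((hA.summable.add hB.summable)).div_const 2
  set θ := ∑' x, (a x * b x)^(q/2) with hθdef
  have hθ : HasSum (fun x => (a x * b x)^(q/2)) θ := hsumab.hasSum
  have hθ1 : θ ≤ 1 := by
    have h2 : HasSum (fun x => (a x^q + b x^q)/2) 1 := by
      have := (hA.add hB).div_const 2
      norm_num at this
      exact this
    exact hasSum_le (fun x => amgm_rpow (hann x) (hbnn x)) hθ h2
  -- part (α)
  have halpha : ‖u+v‖^q ≤ 2 + (2^q - 2)*θ := by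
    have h1 : HasSum (fun x => (a x + b x)^q) (‖u+v‖^q) := by
      have := lp.hasSum_norm hq0 (u+v)
      simpa only [coord_add_norm hu hv] using this
    have h2 : HasSum (fun x => (a x^q + b x^q) + (2^q-2)*((a x * b x)^(q/2)))
        ((1+1) + (2^q-2)*θ) := (hA.add hB).add (hθ.mul_left _)
    have h3 := hasSum_le (fun x => ?_) h1 h2
    · linarith
    · exact scalar_le2 hq1 hq2 (hann x) (hbnn x)
  -- part (β): Cauchy-Schwarz in ℓ²
  set x' : G → ℝ := fun i => a i ^ (q/2) with hx'
  set y' : G → ℝ := fun i => b i ^ (q/2) with hy'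
  have hx2 : HasSum (fun i => x' i ^ 2) 1 := by
    have : ∀ i, x' i ^ 2 = a i ^ q := fun i => sq_rpow (hann i)
    simpa only [this] using hA
  have hy2 : HasSum (fun i => y' i ^ 2) 1 := by
    have : ∀ i, y' i ^ 2 = b i ^ q := fun i => sq_rpow (hbnn i)
    simpa only [this] using hB
  have hxy : HasSum (fun i => x' i * y' i) θ := by
    have : ∀ i, x' i * y' i = (a i * b i)^(q/2) := fun i =>
      (Real.mul_rpow (hann i) (hbnn i)).symm
    simpa only [this] using hθ
  have h2R : (0:ℝ) < (2:ℝ≥0∞).toReal := by rw [ENNReal.toReal_ofNat]; norm_num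
  have hrw2 : ∀ r : ℝ, r ^ (2:ℝ≥0∞).toReal = r^2 := by
    intro r; rw [ENNReal.toReal_ofNat, Real.rpow_two]
  have memF : Memℓp (fun i => x' i - y' i) (2:ℝ≥0∞) := by
    apply memℓp_gen
    apply Summable.of_nonneg_of_le (fun i => by positivity)
      (fun i => ?_) (((hx2.summable.add hy2.summable)).mul_left 2)
    rw [hrw2, Real.norm_eq_abs, sq_abs]
    nlinarith [sq_nonneg (x' i + y' i)]
  have memH : Memℓp (fun i => x' i + y' i) (2:ℝ≥0∞) := by
    apply memℓp_gen
    apply Summable.of_nonneg_of_le (fun i => by positivity)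
      (fun i => ?_) (((hx2.summable.add hy2.summable)).mul_left 2)
    rw [hrw2, Real.norm_eq_abs, sq_abs]
    nlinarith [sq_nonneg (x' i - y' i)]
  set F : lp (fun _:G => ℝ) 2 := ⟨fun i => x' i - y' i, memF⟩ with hF
  set H : lp (fun _:G => ℝ) 2 := ⟨fun i => x' i + y' i, memH⟩ with hH
  have hFcoe : ∀ i, (F : ∀ _:G, ℝ) i = x' i - y' i := fun i => rfl
  have hHcoe : ∀ i, (H : ∀ _:G, ℝ) i = x' i + y' i := fun i => rfl
  have hFn : HasSum (fun i => (x' i - y' i)^2) (‖F‖^(2:ℝ≥0∞).toReal) := by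
    have h1 := lp.hasSum_norm h2R F
    have e : ∀ i, ‖(F : ∀ _:G, ℝ) i‖^(2:ℝ≥0∞).toReal = (x' i - y' i)^2 := fun i => by
      rw [hFcoe, hrw2, Real.norm_eq_abs, sq_abs]
    simpa only [e] using h1
  have hHn : HasSum (fun i => (x' i + y' i)^2) (‖H‖^(2:ℝ≥0∞).toReal) := by
    have h1 := lp.hasSum_norm h2R H
    have e : ∀ i, ‖(H : ∀ _:G, ℝ) i‖^(2:ℝ≥0∞).toReal = (x' i + y' i)^2 := fun i => by
      rw [hHcoe, hrw2, Real.norm_eq_abs, sq_abs]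
    simpa only [e] using h1
  have hFval2 : HasSum (fun i => (x' i - y' i)^2) (2 - 2*θ) := by
    have h2 := (hx2.add hy2).sub (hxy.mul_left 2)
    have e : ∀ i, (x' i - y' i)^2 = (x' i^2 + y' i^2) - 2*(x' i * y' i) := fun i => by ring
    have e2 : (1:ℝ)+1 - 2*θ = 2 - 2*θ := by ring
    rw [← e2]
    simpa only [e] using h2
  have hHval2 : HasSum (fun i => (x' i + y' i)^2) (2 + 2*θ) := by
    have h2 := (hx2.add hy2).add (hxy.mul_left 2)
    have e : ∀ i, (x' i + y' i)^2 = (x' i^2 + y' i^2) + 2*(x' i * y' i) := fun i => by ring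
    have e2 : (1:ℝ)+1 + 2*θ = 2 + 2*θ := by ring
    rw [← e2]
    simpa only [e] using h2
  have hFn2 : ‖F‖^2 = 2 - 2*θ := by rw [← hrw2]; exact hFn.unique hFval2
  have hHn2 : ‖H‖^2 = 2 + 2*θ := by rw [← hrw2]; exact hHn.unique hHval2
  have hθ2 : 0 ≤ 2 - 2*θ := by rw [← hFn2]; positivity
  have hFval : ‖F‖ = Real.sqrt (2 - 2*θ) := by
    rw [← hFn2, Real.sqrt_sq (norm_nonneg F)]
  have hHle : ‖H‖ ≤ 2 := by nlinarith [norm_nonneg H, hHn2, hθ1]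
  have hconj : ((2:ℝ≥0∞).toReal).HolderConjugate ((2:ℝ≥0∞).toReal) := by
    rw [ENNReal.toReal_ofNat]
    exact Real.HolderConjugate.two_two
  obtain ⟨hsummFH, hholder⟩ := lp.tsum_mul_le_mul_norm hconj F H
  have hbeta : ‖u-v‖^q ≤ 2*Real.sqrt (2-2*θ) := by
    have h1 : HasSum (fun i => |a i - b i|^q) (‖u-v‖^q) := by
      have := lp.hasSum_norm hq0 (u-v)
      simpa only [coord_sub_norm hu hv] using this
    have hptwise : ∀ i, |a i - b i|^q ≤ ‖(F : ∀ _:G, ℝ) i‖ * ‖(H : ∀ _:G, ℝ) i‖ := by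
      intro i
      rw [hFcoe, hHcoe, Real.norm_eq_abs, Real.norm_eq_abs,
        abs_of_nonneg (by positivity : (0:ℝ) ≤ x' i + y' i)]
      exact abs_sub_rpow_le hq1 (hann i) (hbnn i)
    calc ‖u-v‖^q = ∑' i, |a i - b i|^q := h1.tsum_eq.symm
      _ ≤ ∑' i, ‖(F : ∀ _:G, ℝ) i‖ * ‖(H : ∀ _:G, ℝ) i‖ :=
          Summable.tsum_le_tsum hptwise h1.summable hsummFH
      _ ≤ ‖F‖ * ‖H‖ := hholder
      _ = Real.sqrt (2-2*θ) * ‖H‖ := by rw [hFval]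
      _ ≤ Real.sqrt (2-2*θ) * 2 := by
          exact mul_le_mul_of_nonneg_left hHle (Real.sqrt_nonneg _)
      _ = 2*Real.sqrt (2-2*θ) := by ring
  exact ⟨θ, hθ2, halpha, hbeta⟩

end Convexity



section Delta

lemma small_delta {c : ℝ} (q : ℝ) (hc : 0 < c) :
    ∃ δ : ℝ, 0 < δ ∧ δ < 1 ∧ 2^q - (2-δ)^q < c := by
  have hcont : ContinuousAt (fun d : ℝ => (2:ℝ)^q - (2-d)^q) 0 := by
    apply ContinuousAt.sub continuousAt_const
    apply ContinuousAt.rpow_const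
    · exact (continuous_const.sub continuous_id).continuousAt
    · left; norm_num
  have hev : ∀ᶠ d in 𝓝 (0:ℝ), (2:ℝ)^q - (2-d)^q < c := by
    have h2 := hcont.tendsto
    have h0 : (2:ℝ)^q - (2-(0:ℝ))^q = 0 := by norm_num
    rw [h0] at h2
    exact h2.eventually_lt_const hc
  obtain ⟨η, hη, hball⟩ := Metric.eventually_nhds_iff.1 hev
  refine ⟨min (η/2) (1/2), by positivity, ?_, ?_⟩
  · have := min_le_right (η/2) (1/2); linarith
  · apply hball
    rw [Real.dist_eq, sub_zero, abs_of_pos (by positivity)]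
    have := min_le_left (η/2) (1/2); linarith

lemma norm_le_of_rpow_le {q x ε : ℝ} (hq0 : 0 < q) (hx : 0 ≤ x) (hε : 0 < ε)
    (h : x^q ≤ ε^q) : x ≤ ε := by
  by_contra hc
  exact absurd h (not_le.2 (Real.rpow_lt_rpow hε.le (not_le.1 hc) hq0))

variable {G : Type*} {p : ℝ≥0∞} [Fact (1 ≤ p)]

lemma exists_delta (hq1 : 1 < p.toReal) {ε : ℝ} (hε : 0 < ε) :
    ∃ δ : ℝ, 0 < δ ∧ δ < 1 ∧ ∀ u v : lp (fun _ : G => ℂ) p,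
      (∀ x, 0 ≤ (u : ∀ _:G, ℂ) x) → (∀ x, 0 ≤ (v : ∀ _:G, ℂ) x) → ‖u‖ = 1 → ‖v‖ = 1 →
      2 - δ ≤ ‖u+v‖ → ‖u-v‖ ≤ ε := by
  set q := p.toReal with hqdef
  have hq0 : 0 < q := lt_trans zero_lt_one hq1
  have hεq : 0 < ε^q := Real.rpow_pos_of_pos hε q
  rcases le_total 2 q with hq2 | hq2
  · -- case q ≥ 2
    obtain ⟨δ, hδ0, hδ1, hδ⟩ := small_delta q hεq
    refine ⟨δ, hδ0, hδ1, fun u v hu hv hun hvn hsum => ?_⟩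
    have hkey := lp_clarkson hq2 hu hv
    rw [hun, hvn, Real.one_rpow] at hkey
    have h1 : (2-δ)^q ≤ ‖u+v‖^q :=
      Real.rpow_le_rpow (by linarith) hsum hq0.le
    have h2 : (2:ℝ)^(q-1) * (1+1) = 2^q := by
      rw [Real.rpow_sub (by norm_num : (0:ℝ) < 2), Real.rpow_one]
      ring
    rw [h2] at hkey
    have : ‖u-v‖^q ≤ ε^q := by linarith
    exact norm_le_of_rpow_le hq0 (norm_nonneg _) hε this
  · -- case q ≤ 2
    have hD : (0:ℝ) < 2^q - 2 := by
      have : (2:ℝ)^(1:ℝ) < 2^q := Real.rpow_lt_rpow_left_iff one_lt_two |>.2 hq1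
      rw [Real.rpow_one] at this; linarith
    set c := (ε^q/2)^2 * (2^q - 2) / 2 with hcdef
    have hc : 0 < c := by positivity
    obtain ⟨δ, hδ0, hδ1, hδ⟩ := small_delta q hc
    refine ⟨δ, hδ0, hδ1, fun u v hu hv hun hvn hsum => ?_⟩
    obtain ⟨θ, hθ2, halpha, hbeta⟩ := lp_le2 hq1.le hq2 hu hv hun hvn
    have h1 : (2-δ)^q ≤ ‖u+v‖^q :=
      Real.rpow_le_rpow (by linarith) hsum hq0.le
    -- θ lower bound
    have hθlb : ((2-δ)^q - 2) / (2^q-2) ≤ θ := by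
      rw [div_le_iff₀ hD]
      nlinarith
    have h2 : 2 - 2*θ < (ε^q/2)^2 := by
      have e1 : 2 - 2*θ ≤ 2 - 2*(((2-δ)^q - 2) / (2^q-2)) := by linarith
      have e2 : 2 - 2*(((2-δ)^q - 2) / (2^q-2)) < (ε^q/2)^2 := by
        have expand : 2 - 2*(((2-δ)^q - 2) / (2^q-2)) = (2*(2^q - (2-δ)^q)) / (2^q-2) := by
          field_simp
          ring
        rw [expand, div_lt_iff₀ hD]
        have hcval : c = (ε^q/2)^2 * (2^q - 2) / 2 := hcdef
        nlinarith
      linarith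
    have h3 : Real.sqrt (2-2*θ) < ε^q/2 := by
      have := Real.sqrt_lt_sqrt hθ2 h2
      rwa [Real.sqrt_sq (by positivity)] at this
    have h4 : ‖u-v‖^q ≤ ε^q := by linarith
    exact norm_le_of_rpow_le hq0 (norm_nonneg _) hε h4

end Delta



section Final
variable {G : Type*} [Group G] [DecidableEq G] {p : ℝ≥0∞} [Fact (1 ≤ p)]
  (hp' : p ≠ ⊤) {lam : G → (lp (fun _ : G => ℂ) p →L[ℂ] lp (fun _ : G => ℂ) p)}
  (hlam : IsLeftReg lam)

include hp' hlam in
lemma exists_good (hq1 : 1 < p.toReal)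
    (hR : ∀ E : Finset G, ‖∑ t ∈ E, lam t‖ = (E.card : ℝ))
    (F : Finset G) {ε : ℝ} (hε : 0 < ε) :
    ∃ f : lp (fun _ : G => ℂ) p, (∀ x, 0 ≤ (f : ∀ _:G, ℂ) x) ∧ ‖f‖ = 1 ∧
      ∀ s ∈ F, ‖lam s f - f‖ ≤ ε := by
  have hq0 : 0 < p.toReal := lt_trans zero_lt_one hq1
  obtain ⟨δ, hδ0, hδ1, hδ⟩ := exists_delta (G := G) (p := p) hq1 hε
  set E : Finset G := insert 1 F with hE
  set S := ∑ t ∈ E, lam t with hS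
  set n : ℕ := E.card with hn
  have hn1 : 1 ≤ n := Finset.card_pos.2 ⟨1, Finset.mem_insert_self 1 F⟩
  have hSnorm : ‖S‖ = (n:ℝ) := hR E
  have hnot : ¬ (∀ x : lp (fun _ : G => ℂ) p, ‖x‖ ≠ 0 → ‖S x‖ ≤ ((n:ℝ) - δ) * ‖x‖) := by
    intro hall
    have h1 : (0:ℝ) ≤ (n:ℝ) - δ := by
      have : (1:ℝ) ≤ (n:ℝ) := by exact_mod_cast hn1
      linarith
    have := S.opNorm_le_bound' h1 hall
    rw [hSnorm] at this
    linarith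
  push_neg at hnot
  obtain ⟨g₀, hg₀ne, hg₀lt⟩ := hnot
  have hg₀pos : 0 < ‖g₀‖ := lt_of_le_of_ne (norm_nonneg _) (Ne.symm hg₀ne)
  set g : lp (fun _ : G => ℂ) p := ((‖g₀‖⁻¹ : ℝ) : ℂ) • g₀ with hg
  have hgn : ‖g‖ = 1 := by
    rw [hg, norm_smul, Complex.norm_real, Real.norm_eq_abs, abs_of_pos (by positivity)]
    field_simp
  have hSg : (n:ℝ) - δ < ‖S g‖ := by
    have hmap : S g = ((‖g₀‖⁻¹ : ℝ) : ℂ) • S g₀ := map_smul S _ g₀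
    rw [hmap, norm_smul, Complex.norm_real, Real.norm_eq_abs, abs_of_pos (by positivity)]
    have h2 := mul_lt_mul_of_pos_left hg₀lt (inv_pos.2 hg₀pos)
    calc (n:ℝ) - δ = ‖g₀‖⁻¹ * (((n:ℝ) - δ) * ‖g₀‖) := by field_simp
      _ < ‖g₀‖⁻¹ * ‖S g₀‖ := h2
  set f := absv g hq0 with hf
  have hfnn : ∀ x, 0 ≤ (f : ∀ _:G, ℂ) x := fun x => by
    rw [hf, absv_coord]
    exact Complex.zero_le_real.2 (norm_nonneg _)
  have hfn : ‖f‖ = 1 := by rw [hf, absv_norm, hgn]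
  have hSf : (n:ℝ) - δ < ‖S f‖ := by
    refine lt_of_lt_of_le hSg (norm_le_of_coord hq0 fun x => ?_)
    rw [hS, sum_lam_coord hp' hlam E g x, sum_lam_coord hp' hlam E f x]
    have e1 : ∀ t : G, (f : ∀ _:G, ℂ) (t⁻¹ * x) = ((‖(g : ∀ _:G, ℂ) (t⁻¹ * x)‖ : ℝ) : ℂ) :=
      fun t => by rw [hf, absv_coord]
    simp only [e1]
    rw [← Complex.ofReal_sum, Complex.norm_real, Real.norm_eq_abs,
      abs_of_nonneg (Finset.sum_nonneg fun t _ => norm_nonneg _)]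
    exact norm_sum_le _ _
  refine ⟨f, hfnn, hfn, fun s hsF => ?_⟩
  by_cases hs1 : s = 1
  · rw [hs1, lam_one_apply hp' hlam, sub_self, norm_zero]
    exact hε.le
  · set v := lam s f with hv
    have hvnn : ∀ x, 0 ≤ (v : ∀ _:G, ℂ) x := fun x => by
      rw [hv, lam_coord hp' hlam]
      exact hfnn _
    have hvn : ‖v‖ = 1 := by rw [hv, lam_norm hp' hlam s f hq0, hfn]
    have h1s : (1:G) ≠ s := fun h => hs1 h.symm
    have hsub : ({1, s} : Finset G) ⊆ E := by
      intro t ht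
      rcases Finset.mem_insert.1 ht with rfl | ht
      · exact Finset.mem_insert_self 1 F
      · rw [Finset.mem_singleton] at ht
        exact Finset.mem_insert_of_mem (ht ▸ hsF)
    have hcard2 : ({1, s} : Finset G).card = 2 := Finset.card_pair h1s
    have hn2 : 2 ≤ n := by
      have := Finset.card_le_card hsub
      rwa [hcard2] at this
    have hsplit : S f = (∑ t ∈ E \ {1, s}, lam t f) + (f + v) := by
      rw [hS, ContinuousLinearMap.sum_apply]
      rw [← Finset.sum_sdiff hsub]
      congr 1
      rw [Finset.sum_pair h1s, lam_one_apply hp' hlam, hv]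
    have hbound : ‖S f‖ ≤ ((n:ℝ) - 2) + ‖f + v‖ := by
      rw [hsplit]
      refine (norm_add_le _ _).trans (add_le_add ?_ le_rfl)
      calc ‖∑ t ∈ E \ {1, s}, lam t f‖ ≤ ∑ t ∈ E \ {1, s}, ‖lam t f‖ := norm_sum_le _ _
        _ = ∑ _t ∈ E \ {1, s}, (1:ℝ) := by
            refine Finset.sum_congr rfl fun t _ => ?_
            rw [lam_norm hp' hlam t f hq0, hfn]
        _ = ((E \ {1, s}).card : ℝ) := by simp
        _ = (n:ℝ) - 2 := by
            rw [Finset.card_sdiff_of_subset hsub, hcard2]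
            have : (2:ℕ) ≤ E.card := hn2
            push_cast [Nat.cast_sub this]
            ring
    have h2δ : 2 - δ ≤ ‖f + v‖ := by linarith
    have := hδ f v hfnn hvnn hfn hvn h2δ
    rwa [hv, norm_sub_rev]

end Final


theorem stmt7 {G : Type u} [Group G] [DecidableEq G] {p : ℝ≥0∞} [Fact (1 ≤ p)]
    (hp : 1 < p) (hp' : p ≠ ⊤)
    (lam : G → (lp (fun _ : G => ℂ) p →L[ℂ] lp (fun _ : G => ℂ) p))
    (hlam : IsLeftReg lam) :
    (∃ (ι : Type u) (l : Filter ι) (fα : ι → lp (fun _ : G => ℂ) p), l.NeBot ∧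
      (∀ α, IsNonneg (fα α) ∧ ‖fα α‖ = 1) ∧
      ∀ s : G, Tendsto (fun α => ‖lam s (fα α) - fα α‖) l (𝓝 0)) ↔
    ∀ E : Finset G, ‖∑ t ∈ E, lam t‖ = (E.card : ℝ) := by
  have hq1 : 1 < p.toReal := by
    rw [← ENNReal.toReal_one]
    exact (ENNReal.toReal_lt_toReal (by norm_num) hp').2 hp
  have hq0 : 0 < p.toReal := lt_trans zero_lt_one hq1
  constructor
  · rintro ⟨ι, l, fα, hl, hprop, htend⟩ E
    exact forward_dir hp' hlam hq0 hl fα (fun α => (hprop α).2) htend E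
  · intro hR
    have hex : ∀ (F : Finset G) (k : ℕ), ∃ f : lp (fun _ : G => ℂ) p,
        (∀ x, 0 ≤ (f : ∀ _:G, ℂ) x) ∧ ‖f‖ = 1 ∧
        ∀ s ∈ F, ‖lam s f - f‖ ≤ 1/((k:ℝ)+1) :=
      fun F k => exists_good hp' hlam hq1 hR F (by positivity)
    refine ⟨Finset G × ℕ, atTop, fun Ek => (hex Ek.1 Ek.2).choose, atTop_neBot,
      fun Ek => ?_, fun s => ?_⟩
    · obtain ⟨h1, h2, _⟩ := (hex Ek.1 Ek.2).choose_spec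
      exact ⟨h1, h2⟩
    · apply squeeze_zero' (Eventually.of_forall (fun Ek => norm_nonneg _))
      · refine (eventually_ge_atTop (({s} : Finset G), 0)).mono (fun Ek hEk => ?_)
        obtain ⟨_, _, h3⟩ := (hex Ek.1 Ek.2).choose_spec
        exact h3 s (Finset.singleton_subset_iff.1 hEk.1)
      · have h5 : Tendsto (Prod.snd : Finset G × ℕ → ℕ) atTop atTop := by
          rw [← Filter.prod_atTop_atTop_eq]
          exact tendsto_snd
        exact tendsto_one_div_add_atTop_nhds_zero_nat.comp h5
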